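/- For a circuit input Λ that assigns 1 to exactly one indicator per variable (corresponding to a unique full instantiation x), evaluating a decomposable and smooth circuit under Λ yields AC(x); more generally, if Λ assigns 1 to a set of indicators so that its compatible full instantiations are x_1, …, x_m, and AC computes a factor f, then AC evaluates under Λ to f(x_1) + … + f(x_m). -/

import Mathlib

/-- An arithmetic circuit over variables `ι` with values `α`: leaves are indicator
variables `λ_{i,v}` or real parameters; internal nodes are sums or products. -/
inductive AC (ι α : Type) : Type where
  | ind (i : ι) (v : α)
  | param (θ : ℝ)
  | sum (l r : AC ι α)
  | prod (l r : AC ι α)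

namespace AC

variable {ι α : Type} [Fintype ι] [DecidableEq ι] [Fintype α] [DecidableEq α]

/-- Evaluate the circuit under a circuit input `Λ` assigning 0/1 to each indicator. -/
def eval (Λ : ι → α → Bool) : AC ι α → ℝ
  | ind i v => if Λ i v then 1 else 0
  | param θ => θ
  | sum l r => l.eval Λ + r.eval Λ
  | prod l r => l.eval Λ * r.eval Λ

/-- Evaluate the maximizer circuit (sum nodes replaced by max nodes). -/
def evalMax (Λ : ι → α → Bool) : AC ι α → ℝ
  | ind i v => if Λ i v then 1 else 0
  | param θ => θ
  | sum l r => max (l.evalMax Λ) (r.evalMax Λ)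
  | prod l r => l.evalMax Λ * r.evalMax Λ

/-- The circuit input corresponding to a full instantiation `x`. -/
def inputOf (x : ι → α) : ι → α → Bool := fun i v => decide (x i = v)

/-- The circuit input corresponding to a partial instantiation `y`:
an indicator is set to 1 iff its value is compatible with `y`. -/
def pinputOf (y : ι → Option α) : ι → α → Bool := fun i v =>
  match y i with
  | none => true
  | some w => decide (w = v)

/-- The value `AC(x)` of the circuit at a full instantiation `x`. -/
def evalAt (x : ι → α) (c : AC ι α) : ℝ := c.eval (inputOf x)

/-- The value `AC(y)` of the circuit at a partial instantiation `y`. -/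
def evalP (y : ι → Option α) (c : AC ι α) : ℝ := c.eval (pinputOf y)

/-- Maximizer-circuit value at a full instantiation. -/
def evalMaxAt (x : ι → α) (c : AC ι α) : ℝ := c.evalMax (inputOf x)

/-- Maximizer-circuit value at a partial instantiation. -/
def evalMaxP (y : ι → Option α) (c : AC ι α) : ℝ := c.evalMax (pinputOf y)

/-- `vars n`: variables with some indicator at or under the node. -/
def vars : AC ι α → Finset ι
  | ind i _ => {i}
  | param _ => ∅
  | sum l r => l.vars ∪ r.vars
  | prod l r => l.vars ∪ r.vars

/-- The multiset of parameters appearing in the circuit. -/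
def params : AC ι α → Multiset ℝ
  | ind _ _ => 0
  | param θ => {θ}
  | sum l r => l.params + r.params
  | prod l r => l.params + r.params

/-- Decomposability: children of every `*`-node have disjoint variable sets. -/
def Decomposable : AC ι α → Prop
  | ind _ _ => True
  | param _ => True
  | sum l r => l.Decomposable ∧ r.Decomposable
  | prod l r => Disjoint l.vars r.vars ∧ l.Decomposable ∧ r.Decomposable

/-- Smoothness: every child of a `+`-node mentions the same variables as the node. -/
def Smooth : AC ι α → Prop
  | ind _ _ => True
  | param _ => True
  | sum l r => l.vars = r.vars ∧ l.Smooth ∧ r.Smooth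
  | prod l r => l.Smooth ∧ r.Smooth

/-- Determinism: under every full instantiation, every `+`-node has at most one
non-zero input. -/
def Deterministic : AC ι α → Prop
  | ind _ _ => True
  | param _ => True
  | sum l r => (∀ x : ι → α, l.evalAt x = 0 ∨ r.evalAt x = 0) ∧
      l.Deterministic ∧ r.Deterministic
  | prod l r => l.Deterministic ∧ r.Deterministic

/-- A full instantiation `x` is compatible with a partial instantiation `y`. -/
def Compat (x : ι → α) (y : ι → Option α) : Prop :=
  ∀ i, y i = none ∨ y i = some (x i)

instance (x : ι → α) (y : ι → Option α) : Decidable (Compat x y) := by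
  unfold Compat; infer_instance

/-- The graph of a full instantiation, i.e. its term `{(i, x i) | i}`. -/
def graphOf (x : ι → α) : Finset (ι × α) := Finset.univ.image fun i => (i, x i)

/-- The marginal `Σ_{x ∼ y} f(x)` of a factor `f` at a partial instantiation `y`. -/
def margSum (f : (ι → α) → ℝ) (y : ι → Option α) : ℝ :=
  ∑ x : ι → α, if Compat x y then f x else 0

/-- The circuit computes the factor `f`. -/
def Computes (c : AC ι α) (f : (ι → α) → ℝ) : Prop := ∀ x, c.evalAt x = f x

/-- The circuit computes the marginals of the factor `f`. -/
def ComputesMarginals (c : AC ι α) (f : (ι → α) → ℝ) : Prop :=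
  ∀ y : ι → Option α, c.evalP y = margSum f y

/-- The multiset of (term, coefficient) pairs of all complete subcircuits. -/
def subs : AC ι α → Multiset (Finset (ι × α) × ℝ)
  | ind i v => {({(i, v)}, 1)}
  | param θ => {(∅, θ)}
  | sum l r => l.subs + r.subs
  | prod l r => l.subs.bind fun a => r.subs.map fun b => (a.1 ∪ b.1, a.2 * b.2)

/-- Complete subcircuits of a circuit: choose one child of each `+`-node and all
children of each `*`-node. -/
inductive Sub : AC ι α → Type where
  | ind (i : ι) (v : α) : Sub (AC.ind i v)
  | param (θ : ℝ) : Sub (AC.param θ)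
  | sumL {l r : AC ι α} : Sub l → Sub (AC.sum l r)
  | sumR {l r : AC ι α} : Sub r → Sub (AC.sum l r)
  | prod {l r : AC ι α} : Sub l → Sub r → Sub (AC.prod l r)

/-- The term of a complete subcircuit: the set of indicator values appearing in it. -/
def Sub.term : {c : AC ι α} → Sub c → Finset (ι × α)
  | _, .ind i v => {(i, v)}
  | _, .param _ => ∅
  | _, .sumL s => s.term
  | _, .sumR s => s.term
  | _, .prod s t => s.term ∪ t.term

/-- The coefficient of a complete subcircuit: the product of its parameters. -/
def Sub.coeff : {c : AC ι α} → Sub c → ℝ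
  | _, .ind _ _ => 1
  | _, .param θ => θ
  | _, .sumL s => s.coeff
  | _, .sumR s => s.coeff
  | _, .prod s t => s.coeff * t.coeff


end AC


namespace AC

variable {ι α : Type} [Fintype ι] [DecidableEq ι] [Fintype α] [DecidableEq α]

lemma eval_congr' {c : AC ι α} {Λ Λ' : ι → α → Bool}
    (h : ∀ i ∈ c.vars, ∀ v, Λ i v = Λ' i v) : c.eval Λ = c.eval Λ' := by
  induction c with
  | ind i v => simp only [eval]; rw [h i (by simp [vars]) v]
  | param θ => rfl
  | sum l r ihl ihr =>
      simp only [eval]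
      rw [ihl fun i hi v => h i (by simp [vars, hi]) v,
        ihr fun i hi v => h i (by simp [vars, hi]) v]
  | prod l r ihl ihr =>
      simp only [eval]
      rw [ihl fun i hi v => h i (by simp [vars, hi]) v,
        ihr fun i hi v => h i (by simp [vars, hi]) v]

lemma evalAt_congr' {c : AC ι α} {x y : ι → α}
    (h : ∀ i ∈ c.vars, x i = y i) : c.evalAt x = c.evalAt y := by
  unfold evalAt
  exact eval_congr' fun i hi v => by simp [inputOf, h i hi]

/-- Involution swapping coordinates inside `S`. -/
def swapIn (S : Finset ι) : ((ι → α) × (ι → α)) ≃ ((ι → α) × (ι → α)) where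
  toFun p := (fun i => if i ∈ S then p.1 i else p.2 i,
              fun i => if i ∈ S then p.2 i else p.1 i)
  invFun p := (fun i => if i ∈ S then p.1 i else p.2 i,
              fun i => if i ∈ S then p.2 i else p.1 i)
  left_inv p := by
    ext i <;> simp only <;> by_cases h : i ∈ S <;> simp [h]
  right_inv p := by
    ext i <;> simp only <;> by_cases h : i ∈ S <;> simp [h]

lemma sum_mul_sum_of_depends {S : Finset ι} (A B : (ι → α) → ℝ)
    (hA : ∀ x y : ι → α, (∀ i ∈ S, x i = y i) → A x = A y)
    (hB : ∀ x y : ι → α, (∀ i ∉ S, x i = y i) → B x = B y) :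
    (∑ x : ι → α, A x) * (∑ y : ι → α, B y)
      = (Fintype.card (ι → α) : ℝ) * ∑ x : ι → α, A x * B x := by
  have h1 : (∑ x : ι → α, A x) * (∑ y : ι → α, B y)
      = ∑ p : (ι → α) × (ι → α), A p.1 * B p.2 := by
    rw [Fintype.sum_prod_type]
    rw [Finset.sum_mul]
    exact Finset.sum_congr rfl fun x _ => by rw [Finset.mul_sum]
  rw [h1, ← Equiv.sum_comp (swapIn S) (fun p => A p.1 * B p.2)]
  have h2 : ∀ p : (ι → α) × (ι → α),
      A ((swapIn S p).1) * B ((swapIn S p).2) = A p.1 * B p.1 := by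
    intro p
    have hA' : A ((swapIn S p).1) = A p.1 :=
      hA _ _ fun i hi => by simp [swapIn, hi]
    have hB' : B ((swapIn S p).2) = B p.1 :=
      hB _ _ fun i hi => by simp [swapIn, hi]
    rw [hA', hB']
  rw [Fintype.sum_congr _ _ h2, Fintype.sum_prod_type]
  rw [Finset.mul_sum]
  refine Finset.sum_congr rfl fun x _ => ?_
  have h3 : ∀ y : ι → α, A (x, y).1 * B (x, y).1 = A x * B x := fun _ => rfl
  rw [Finset.sum_congr rfl fun y _ => h3 y, Finset.sum_const, Finset.card_univ,
    nsmul_eq_mul]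

lemma count_single (i : ι) (v : α) (t : ℝ) :
    ∑ x : ι → α, (if x i = v then t else 0)
      = (Fintype.card α : ℝ) ^ (({i}ᶜ : Finset ι).card) * t := by
  rw [← Equiv.sum_comp (Equiv.funSplitAt i α).symm
    (fun x : ι → α => if x i = v then t else 0)]
  have hval : ∀ p : α × ({ j // j ≠ i } → α),
      ((Equiv.funSplitAt i α).symm p) i = p.1 := by
    intro p; simp [Equiv.funSplitAt, Equiv.piSplitAt]
  have : ∑ p : α × ({ j // j ≠ i } → α),
      (if ((Equiv.funSplitAt i α).symm p) i = v then t else 0)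
      = ∑ p : α × ({ j // j ≠ i } → α), (if p.1 = v then t else 0) := by
    exact Fintype.sum_congr _ _ fun p => by rw [hval]
  rw [this, Fintype.sum_prod_type]
  have hcard : Fintype.card { j // j ≠ i } = ({i}ᶜ : Finset ι).card := by
    rw [Finset.card_compl, Finset.card_singleton]
    rw [Fintype.card_subtype_compl (p := fun j => j = i)]
    simp [Fintype.card_subtype_eq]
  rw [← hcard, Finset.sum_comm]
  have h2 : ∀ y : { j // j ≠ i } → α, (∑ x : α, if (x, y).1 = v then t else 0) = t := by
    intro y
    have h3 : ∀ x : α, (if (x, y).1 = v then t else 0) = (if x = v then t else 0) :=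
      fun _ => rfl
    rw [Finset.sum_congr rfl fun x _ => h3 x,
      Finset.sum_ite_eq' Finset.univ v (fun _ => t), if_pos (Finset.mem_univ v)]
  rw [Finset.sum_congr rfl fun y _ => h2 y, Finset.sum_const, Finset.card_univ,
    nsmul_eq_mul]
  congr 1
  rw [Fintype.card_fun]
  push_cast
  rfl

lemma nonempty_of_mem_vars {c : AC ι α} {i : ι} (h : i ∈ c.vars) : Nonempty α := by
  induction c with
  | ind j v => exact ⟨v⟩
  | param θ => simp [vars] at h
  | sum l r ihl ihr =>
      rcases Finset.mem_union.mp h with h | h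
      exacts [ihl h, ihr h]
  | prod l r ihl ihr =>
      rcases Finset.mem_union.mp h with h | h
      exacts [ihl h, ihr h]

lemma main_marginal (c : AC ι α) (hd : c.Decomposable) (hs : c.Smooth)
    (hne : Nonempty α ∨ IsEmpty ι) (Λ : ι → α → Bool) :
    (∑ x : ι → α, if ∀ i ∈ c.vars, Λ i (x i) = true then c.evalAt x else 0)
      = c.eval Λ * (Fintype.card α : ℝ) ^ ((c.varsᶜ : Finset ι).card) := by
  induction c with
  | ind i v =>
      have h1 : ∀ x : ι → α,
          (if ∀ j ∈ ((AC.ind i v : AC ι α).vars), Λ j (x j) = true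
            then (AC.ind i v : AC ι α).evalAt x else 0)
          = (if x i = v then (if Λ i v then (1:ℝ) else 0) else 0) := by
        intro x
        simp only [vars, Finset.mem_singleton, evalAt, eval, inputOf]
        by_cases hx : x i = v
        · simp [hx]
        · simp [hx]
      rw [Fintype.sum_congr _ _ h1, count_single]
      simp only [eval, vars]
      ring
  | param θ =>
      simp only [vars, Finset.notMem_empty, eval, evalAt]
      refine Eq.trans (Finset.sum_congr rfl (fun x _ => if_pos (fun i hi => absurd hi (by simp)))) ?_
      rw [Finset.sum_const, Finset.card_univ, nsmul_eq_mul]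
      have : (Fintype.card (ι → α) : ℝ)
          = (Fintype.card α : ℝ) ^ ((∅ᶜ : Finset ι).card) := by
        rw [Fintype.card_fun]
        push_cast
        congr 1
        simp
      rw [this]; ring
  | sum l r ihl ihr =>
      obtain ⟨hvlr, hsl, hsr⟩ := hs
      obtain ⟨hdl, hdr⟩ := hd
      have hvars : (AC.sum l r).vars = l.vars := by
        simp [vars, hvlr]
      have h1 : ∀ x : ι → α,
          (if ∀ j ∈ (AC.sum l r).vars, Λ j (x j) = true then (AC.sum l r).evalAt x else 0)
          = (if ∀ j ∈ l.vars, Λ j (x j) = true then l.evalAt x else 0)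
            + (if ∀ j ∈ r.vars, Λ j (x j) = true then r.evalAt x else 0) := by
        intro x
        have hcond : (∀ j ∈ (AC.sum l r).vars, Λ j (x j) = true)
            ↔ (∀ j ∈ l.vars, Λ j (x j) = true) := by rw [hvars]
        have hcond' : (∀ j ∈ r.vars, Λ j (x j) = true)
            ↔ (∀ j ∈ l.vars, Λ j (x j) = true) := by rw [← hvlr]
        simp only [evalAt, eval]
        by_cases h : ∀ j ∈ l.vars, Λ j (x j) = true
        · rw [if_pos (hcond.mpr h), if_pos h, if_pos (hcond'.mpr h)]
        · rw [if_neg (fun hh => h (hcond.mp hh)), if_neg h,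
            if_neg (fun hh => h (hcond'.mp hh))]
          ring
      rw [Fintype.sum_congr _ _ h1, Finset.sum_add_distrib,
        ihl hdl hsl, ihr hdr hsr]
      simp only [eval, hvars]
      rw [show r.vars = l.vars from hvlr.symm]
      ring
  | prod l r ihl ihr =>
      obtain ⟨hdisj, hdl, hdr⟩ := hd
      obtain ⟨hsl, hsr⟩ := hs
      set A : (ι → α) → ℝ := fun x => if ∀ j ∈ l.vars, Λ j (x j) = true then l.evalAt x else 0 with hAdef
      set B : (ι → α) → ℝ := fun x => if ∀ j ∈ r.vars, Λ j (x j) = true then r.evalAt x else 0 with hBdef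
      have hA : ∀ x y : ι → α, (∀ i ∈ l.vars, x i = y i) → A x = A y := by
        intro x y h
        simp only [hAdef]
        have hc : (∀ j ∈ l.vars, Λ j (x j) = true) ↔ (∀ j ∈ l.vars, Λ j (y j) = true) := by
          constructor <;> intro hh j hj
          · rw [← h j hj]; exact hh j hj
          · rw [h j hj]; exact hh j hj
        by_cases hx : ∀ j ∈ l.vars, Λ j (x j) = true
        · rw [if_pos hx, if_pos (hc.mp hx), evalAt_congr' h]
        · rw [if_neg hx, if_neg (fun hh => hx (hc.mpr hh))]
      have hB : ∀ x y : ι → α, (∀ i ∉ l.vars, x i = y i) → B x = B y := by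
        intro x y h
        have h' : ∀ i ∈ r.vars, x i = y i := fun i hi =>
          h i (Finset.disjoint_right.mp hdisj hi)
        simp only [hBdef]
        have hc : (∀ j ∈ r.vars, Λ j (x j) = true) ↔ (∀ j ∈ r.vars, Λ j (y j) = true) := by
          constructor <;> intro hh j hj
          · rw [← h' j hj]; exact hh j hj
          · rw [h' j hj]; exact hh j hj
        by_cases hx : ∀ j ∈ r.vars, Λ j (x j) = true
        · rw [if_pos hx, if_pos (hc.mp hx), evalAt_congr' h']
        · rw [if_neg hx, if_neg (fun hh => hx (hc.mpr hh))]
      have hkey := sum_mul_sum_of_depends (S := l.vars) A B hA hB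
      rw [ihl hdl hsl, ihr hdr hsr] at hkey
      have hAB : ∀ x : ι → α, A x * B x
          = (if ∀ j ∈ (AC.prod l r).vars, Λ j (x j) = true then (AC.prod l r).evalAt x else 0) := by
        intro x
        simp only [hAdef, hBdef, vars, evalAt, eval]
        by_cases hx : ∀ j ∈ l.vars ∪ r.vars, Λ j (x j) = true
        · rw [if_pos (fun j hj => hx j (Finset.mem_union_left _ hj)),
            if_pos (fun j hj => hx j (Finset.mem_union_right _ hj))]
          exact (if_pos hx).symm
        · refine Eq.trans ?_ (if_neg hx).symm
          push_neg at hx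
          obtain ⟨j, hjm, hjv⟩ := hx
          rcases Finset.mem_union.mp hjm with hjl | hjr
          · have hz : (if ∀ j ∈ l.vars, Λ j (x j) = true
                then l.eval (inputOf x) else 0) = 0 :=
              if_neg (fun hh => hjv (hh j hjl))
            rw [hz]; ring
          · have hz : (if ∀ j ∈ r.vars, Λ j (x j) = true
                then r.eval (inputOf x) else 0) = 0 :=
              if_neg (fun hh => hjv (hh j hjr))
            rw [hz]; ring
      rw [Fintype.sum_congr _ _ hAB] at hkey
      -- hkey : el * C^cS * (er * C^cT) = card(ι→α) * goalLHS
      have hcards : (l.varsᶜ : Finset ι).card + (r.varsᶜ : Finset ι).card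
          = Fintype.card ι + (((AC.prod l r).varsᶜ : Finset ι)).card := by
        simp only [vars, Finset.card_compl]
        have h1 : (l.vars ∪ r.vars).card = l.vars.card + r.vars.card :=
          Finset.card_union_of_disjoint hdisj
        have h2 : (l.vars ∪ r.vars).card ≤ Fintype.card ι := by
          rw [← Finset.card_univ]; exact Finset.card_le_card (Finset.subset_univ _)
        have h3 : l.vars.card ≤ Fintype.card ι := by
          rw [← Finset.card_univ]; exact Finset.card_le_card (Finset.subset_univ _)
        have h4 : r.vars.card ≤ Fintype.card ι := by
          rw [← Finset.card_univ]; exact Finset.card_le_card (Finset.subset_univ _)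
        omega
      have hC : (Fintype.card (ι → α) : ℝ) = (Fintype.card α : ℝ) ^ (Fintype.card ι) := by
        rw [Fintype.card_fun]; push_cast; rfl
      rw [hC] at hkey
      have hpow : (Fintype.card α : ℝ) ^ ((l.varsᶜ : Finset ι).card)
            * (Fintype.card α : ℝ) ^ ((r.varsᶜ : Finset ι).card)
          = (Fintype.card α : ℝ) ^ (Fintype.card ι)
            * (Fintype.card α : ℝ) ^ (((AC.prod l r).varsᶜ : Finset ι).card) := by
        rw [← pow_add, ← pow_add, hcards]
      have hkey2 : (Fintype.card α : ℝ) ^ (Fintype.card ι)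
          * (∑ x : ι → α, if ∀ j ∈ (AC.prod l r).vars, Λ j (x j) = true
              then (AC.prod l r).evalAt x else 0)
          = (Fintype.card α : ℝ) ^ (Fintype.card ι)
            * ((AC.prod l r).eval Λ
              * (Fintype.card α : ℝ) ^ (((AC.prod l r).varsᶜ : Finset ι).card)) := by
        rw [← hkey]
        simp only [eval]
        calc l.eval Λ * (Fintype.card α : ℝ) ^ ((l.varsᶜ : Finset ι).card)
              * (r.eval Λ * (Fintype.card α : ℝ) ^ ((r.varsᶜ : Finset ι).card))
            = l.eval Λ * r.eval Λ * ((Fintype.card α : ℝ) ^ ((l.varsᶜ : Finset ι).card)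
              * (Fintype.card α : ℝ) ^ ((r.varsᶜ : Finset ι).card)) := by ring
          _ = _ := by rw [hpow]; ring
      rcases hne with hα | hι
      · have : ((Fintype.card α : ℝ) ^ (Fintype.card ι)) ≠ 0 := by
          apply pow_ne_zero
          simp [Fintype.card_ne_zero]
        exact mul_left_cancel₀ this hkey2
      · have : Fintype.card ι = 0 := by simp
        rw [this] at hkey2
        simpa using hkey2

end AC

/-- For a decomposable and smooth circuit: (a) an input setting exactly the
indicators of a full instantiation `x` to `1` evaluates to `AC(x)`; (b) if the
circuit computes a factor `f`, then under any input `Λ` it evaluates to the sum of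
`f(x)` over the full instantiations `x` compatible with `Λ`. -/
theorem stmt17 {ι α : Type} [Fintype ι] [DecidableEq ι] [Fintype α] [DecidableEq α]
    (c : AC ι α) (hd : c.Decomposable) (hs : c.Smooth) (hv : c.vars = Finset.univ) :
    (∀ (Λ : ι → α → Bool) (x : ι → α), (∀ i v, Λ i v = true ↔ x i = v) →
      c.eval Λ = c.evalAt x) ∧
    (∀ f : (ι → α) → ℝ, c.Computes f → ∀ Λ : ι → α → Bool,
      c.eval Λ = ∑ x : ι → α, if ∀ i, Λ i (x i) = true then f x else 0) := by
  have hne : Nonempty α ∨ IsEmpty ι := by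
    rcases isEmpty_or_nonempty ι with hι | hι
    · exact Or.inr hι
    · left
      obtain ⟨i⟩ := hι
      have hi : i ∈ c.vars := by rw [hv]; exact Finset.mem_univ i
      exact AC.nonempty_of_mem_vars hi
  have key : ∀ Λ : ι → α → Bool,
      c.eval Λ = ∑ x : ι → α, if ∀ i, Λ i (x i) = true then c.evalAt x else 0 := by
    intro Λ
    have h := AC.main_marginal c hd hs hne Λ
    rw [hv] at h
    simp only [Finset.compl_univ, Finset.card_empty, pow_zero, mul_one,
      Finset.mem_univ, forall_true_left] at h
    rw [← h]
  constructor
  · intro Λ x hΛ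
    rw [key Λ]
    have h1 : ∀ y : ι → α,
        (if ∀ i, Λ i (y i) = true then c.evalAt y else 0)
        = (if y = x then c.evalAt y else 0) := by
      intro y
      congr 1
      simp only [eq_iff_iff]
      constructor
      · intro h
        funext i
        exact ((hΛ i (y i)).mp (h i)).symm
      · intro h i
        rw [h]
        exact (hΛ i (x i)).mpr rfl
    rw [Fintype.sum_congr _ _ h1, Finset.sum_ite_eq' Finset.univ x c.evalAt,
      if_pos (Finset.mem_univ x)]
  · intro f hf Λ
    rw [key Λ]
    exact Finset.sum_congr rfl fun x _ => by rw [hf x]
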